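/- Spectral bounds for the signal matrix: let R* := Ω · Z · Θᵀ (an N×J real matrix) and σ_⋆(Θ) := inf{‖Θ · x‖ : x ∈ ℝ^K, ‖x‖ = 1}. Then: (i) ‖R*‖ ≤ (max_{k ∈ Fin K} sqrt(Σ_{i ∈ C_k} (ω i)²)) · ‖Θ‖; and (ii) there exists a K-dimensional linear subspace S of ℝ^N (namely the column span of Ω·Z) such that for every v ∈ S, ‖(R*)ᵀ · v‖ ≥ (min_{k ∈ Fin K} sqrt(Σ_{i ∈ C_k} (ω i)²)) · σ_⋆(Θ) · ‖v‖. (By the Courant–Fischer variational characterization, (ii) means that the K-th largest singular value of R* is at least min_k sqrt(Σ_{i ∈ C_k} (ω i)²) · σ_⋆(Θ).) -/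
import Mathlib


open Matrix Finset

noncomputable section

/-- The k-th cluster: indices assigned to latent class k. -/
def clusterSet {N K : ℕ} (s : Fin N → Fin K) (k : Fin K) : Finset (Fin N) :=
  Finset.univ.filter (fun i => s i = k)

/-- The N×K cluster-indicator matrix Z. -/
def clusterInd {N K : ℕ} (s : Fin N → Fin K) : Matrix (Fin N) (Fin K) ℝ :=
  fun i k => if s i = k then 1 else 0

/-- The N×N diagonal matrix Ω of degree parameters. -/
def degMat {N : ℕ} (ω : Fin N → ℝ) : Matrix (Fin N) (Fin N) ℝ :=
  Matrix.diagonal ω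

/-- The ℓ²→ℓ² operator norm of a real matrix. -/
def opNorm {m n : ℕ} (A : Matrix (Fin m) (Fin n) ℝ) : ℝ :=
  ‖LinearMap.toContinuousLinearMap (Matrix.toEuclideanLin A)‖

/-- The smallest singular value of a real matrix:
`σ_⋆(A) = inf {‖A x‖ : ‖x‖ = 1}` with Euclidean norms. -/
def sigmaStar {m n : ℕ} (A : Matrix (Fin m) (Fin n) ℝ) : ℝ :=
  sInf ((fun x : EuclideanSpace ℝ (Fin n) => ‖Matrix.toEuclideanLin A x‖) '' {x | ‖x‖ = 1})

open scoped Matrix.Norms.L2Operator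

lemma opNorm_eq {m n : ℕ} (A : Matrix (Fin m) (Fin n) ℝ) : opNorm A = ‖A‖ := rfl

lemma tEL_apply {m n : ℕ} (A : Matrix (Fin m) (Fin n) ℝ) (x : EuclideanSpace ℝ (Fin n))
    (i : Fin m) : Matrix.toEuclideanLin A x i = ∑ j, A i j * x j := rfl

lemma tEL_mul {m n l : ℕ} (A : Matrix (Fin m) (Fin n) ℝ) (B : Matrix (Fin n) (Fin l) ℝ)
    (x : EuclideanSpace ℝ (Fin l)) :
    Matrix.toEuclideanLin (A * B) x = Matrix.toEuclideanLin A (Matrix.toEuclideanLin B x) := by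
  simp [Matrix.toEuclideanLin_apply, Matrix.mulVec_mulVec]

lemma euclid_norm_sq {m : ℕ} (y : EuclideanSpace ℝ (Fin m)) : ‖y‖ ^ 2 = ∑ i, y i ^ 2 := by
  simp_rw [EuclideanSpace.norm_eq, Real.norm_eq_abs, sq_abs]
  rw [Real.sq_sqrt (by positivity)]

lemma le_of_sq_le_sq'' {a b : ℝ} (ha : 0 ≤ a) (hb : 0 ≤ b) (h : a ^ 2 ≤ b ^ 2) : a ≤ b := by
  nlinarith

/-- Entry formula for M = Ω Z. -/
lemma M_apply {N K : ℕ} (s : Fin N → Fin K) (ω : Fin N → ℝ) (i : Fin N) (k : Fin K) :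
    (degMat ω * clusterInd s) i k = if s i = k then ω i else 0 := by
  simp [degMat, clusterInd, Matrix.diagonal_mul, mul_ite]

/-- (M x) i = ω i * x (s i). -/
lemma Mx_apply {N K : ℕ} (s : Fin N → Fin K) (ω : Fin N → ℝ)
    (x : EuclideanSpace ℝ (Fin K)) (i : Fin N) :
    Matrix.toEuclideanLin (degMat ω * clusterInd s) x i = ω i * x (s i) := by
  rw [tEL_apply]
  simp_rw [M_apply, ite_mul, zero_mul]
  simp

lemma Mx_norm_sq {N K : ℕ} (s : Fin N → Fin K) (ω : Fin N → ℝ)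
    (x : EuclideanSpace ℝ (Fin K)) :
    ‖Matrix.toEuclideanLin (degMat ω * clusterInd s) x‖ ^ 2 =
      ∑ k, (∑ i ∈ clusterSet s k, ω i ^ 2) * x k ^ 2 := by
  rw [euclid_norm_sq]
  simp_rw [Mx_apply, mul_pow]
  rw [← Finset.sum_fiberwise (Finset.univ : Finset (Fin N)) s (fun i => ω i ^ 2 * x (s i) ^ 2)]
  refine Finset.sum_congr rfl fun k _ => ?_
  rw [Finset.sum_mul]
  refine Finset.sum_congr rfl fun i hi => ?_
  simp only [clusterSet, Finset.mem_filter] at hi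
  rw [hi.2]

lemma MtM {N K : ℕ} (s : Fin N → Fin K) (ω : Fin N → ℝ) :
    (degMat ω * clusterInd s)ᵀ * (degMat ω * clusterInd s) =
      Matrix.diagonal (fun k => ∑ i ∈ clusterSet s k, ω i ^ 2) := by
  ext k l
  rw [Matrix.mul_apply]
  simp only [Matrix.transpose_apply, M_apply]
  rcases eq_or_ne k l with rfl | h
  · rw [Matrix.diagonal_apply_eq, clusterSet, Finset.sum_filter]
    refine Finset.sum_congr rfl fun i _ => ?_
    split_ifs <;> ring
  · rw [Matrix.diagonal_apply_ne _ h]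
    refine Finset.sum_eq_zero fun i _ => ?_
    rcases eq_or_ne (s i) k with h1 | h1
    · rcases eq_or_ne (s i) l with h2 | h2
      · exact absurd (h1.symm.trans h2) h
      · simp [h2]
    · simp [h1]

lemma sigmaStar_nonneg {m n : ℕ} (A : Matrix (Fin m) (Fin n) ℝ) : 0 ≤ sigmaStar A :=
  Real.sInf_nonneg (by rintro _ ⟨x, -, rfl⟩; positivity)

lemma sigmaStar_mul_norm_le {m n : ℕ} (A : Matrix (Fin m) (Fin n) ℝ)
    (y : EuclideanSpace ℝ (Fin n)) :
    sigmaStar A * ‖y‖ ≤ ‖Matrix.toEuclideanLin A y‖ := by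
  rcases eq_or_ne y 0 with rfl | hy
  · simp
  · have hny : (0:ℝ) < ‖y‖ := norm_pos_iff.2 hy
    have h1 : sigmaStar A ≤ ‖Matrix.toEuclideanLin A (‖y‖⁻¹ • y)‖ := by
      refine csInf_le ⟨0, ?_⟩ ⟨‖y‖⁻¹ • y, ?_, rfl⟩
      · rintro _ ⟨x, -, rfl⟩; positivity
      · simp [norm_smul, abs_of_nonneg (inv_nonneg.2 hny.le), inv_mul_cancel₀ hny.ne']
    rw [LinearMap.map_smul, norm_smul, Real.norm_eq_abs,
      abs_of_nonneg (inv_nonneg.2 hny.le)] at h1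
    calc sigmaStar A * ‖y‖ ≤ ‖y‖⁻¹ * ‖Matrix.toEuclideanLin A y‖ * ‖y‖ :=
          mul_le_mul_of_nonneg_right h1 hny.le
      _ = ‖Matrix.toEuclideanLin A y‖ := by field_simp

theorem stmt5 (N J K : ℕ) (hN : 0 < N) (hJ : 0 < J) (hK : 0 < K)
    (s : Fin N → Fin K) (hs : ∀ k, (clusterSet s k).Nonempty)
    (ω : Fin N → ℝ) (hω : ∀ i, 0 < ω i)
    (Θ : Matrix (Fin J) (Fin K) ℝ) :
    opNorm (degMat ω * clusterInd s * Θᵀ) ≤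
      (Finset.univ.sup' ⟨⟨0, hK⟩, Finset.mem_univ _⟩
        (fun k => Real.sqrt (∑ i ∈ clusterSet s k, ω i ^ 2))) * opNorm Θ ∧
    ∃ S : Submodule ℝ (EuclideanSpace ℝ (Fin N)),
      Module.finrank ℝ S = K ∧
      ∀ v ∈ S,
        (Finset.univ.inf' ⟨⟨0, hK⟩, Finset.mem_univ _⟩
            (fun k => Real.sqrt (∑ i ∈ clusterSet s k, ω i ^ 2))) * sigmaStar Θ * ‖v‖ ≤
          ‖Matrix.toEuclideanLin (degMat ω * clusterInd s * Θᵀ)ᵀ v‖ := by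
  have hqpos : ∀ k : Fin K, 0 < ∑ i ∈ clusterSet s k, ω i ^ 2 := fun k =>
    Finset.sum_pos (fun i _ => pow_pos (hω i) 2) (hs k)
  have hC0 : 0 ≤ Finset.univ.sup' ⟨⟨0, hK⟩, Finset.mem_univ _⟩
      (fun k => Real.sqrt (∑ i ∈ clusterSet s k, ω i ^ 2)) :=
    le_trans (Real.sqrt_nonneg (∑ i ∈ clusterSet s ⟨0, hK⟩, ω i ^ 2))
      (Finset.le_sup' (f := fun k => Real.sqrt (∑ i ∈ clusterSet s k, ω i ^ 2))
        (Finset.mem_univ (⟨0, hK⟩ : Fin K)))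
  have hc0 : 0 ≤ Finset.univ.inf' ⟨⟨0, hK⟩, Finset.mem_univ _⟩
      (fun k => Real.sqrt (∑ i ∈ clusterSet s k, ω i ^ 2)) :=
    Finset.le_inf' _ _ (fun k _ => Real.sqrt_nonneg _)
  have hMnorm : ‖degMat ω * clusterInd s‖ ≤ Finset.univ.sup' ⟨⟨0, hK⟩, Finset.mem_univ _⟩
      (fun k => Real.sqrt (∑ i ∈ clusterSet s k, ω i ^ 2)) := by
    rw [← opNorm_eq, opNorm]
    refine ContinuousLinearMap.opNorm_le_bound _ hC0 fun x => ?_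
    have h1 : ‖Matrix.toEuclideanLin (degMat ω * clusterInd s) x‖ ^ 2 ≤
        ((Finset.univ.sup' ⟨⟨0, hK⟩, Finset.mem_univ _⟩
          (fun k => Real.sqrt (∑ i ∈ clusterSet s k, ω i ^ 2))) * ‖x‖) ^ 2 := by
      rw [Mx_norm_sq, mul_pow, euclid_norm_sq, Finset.mul_sum]
      refine Finset.sum_le_sum fun k _ => ?_
      have h2 : Real.sqrt (∑ i ∈ clusterSet s k, ω i ^ 2) ≤
          Finset.univ.sup' ⟨⟨0, hK⟩, Finset.mem_univ _⟩
            (fun k => Real.sqrt (∑ i ∈ clusterSet s k, ω i ^ 2)) :=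
        Finset.le_sup' (f := fun k => Real.sqrt (∑ i ∈ clusterSet s k, ω i ^ 2))
          (Finset.mem_univ k)
      have h5 := Real.sqrt_nonneg (∑ i ∈ clusterSet s k, ω i ^ 2)
      have h3 : (∑ i ∈ clusterSet s k, ω i ^ 2) ≤
          (Finset.univ.sup' ⟨⟨0, hK⟩, Finset.mem_univ _⟩
            (fun k => Real.sqrt (∑ i ∈ clusterSet s k, ω i ^ 2))) ^ 2 := by
        have := mul_self_le_mul_self h5 h2
        have h4 := Real.sq_sqrt (hqpos k).le
        nlinarith
      exact mul_le_mul_of_nonneg_right h3 (sq_nonneg (x k))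
    have := le_of_sq_le_sq'' (norm_nonneg _) (by positivity) h1
    simpa using this
  constructor
  · -- part (i)
    rw [opNorm_eq, opNorm_eq]
    calc ‖degMat ω * clusterInd s * Θᵀ‖ ≤ ‖degMat ω * clusterInd s‖ * ‖Θᵀ‖ :=
          Matrix.l2_opNorm_mul _ _
      _ = ‖degMat ω * clusterInd s‖ * ‖Θ‖ := by
          rw [show Θᵀ = Θᴴ by ext i j; simp [Matrix.conjTranspose_apply],
            Matrix.l2_opNorm_conjTranspose]
      _ ≤ _ := mul_le_mul_of_nonneg_right hMnorm (norm_nonneg _)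
  · -- part (ii)
    have hinj : Function.Injective (Matrix.toEuclideanLin (degMat ω * clusterInd s)) := by
      rw [← LinearMap.ker_eq_bot, LinearMap.ker_eq_bot']
      intro x hx
      have h0 : ‖Matrix.toEuclideanLin (degMat ω * clusterInd s) x‖ ^ 2 = 0 := by rw [hx]; simp
      rw [Mx_norm_sq] at h0
      have hterm : ∀ k ∈ Finset.univ,
          (0:ℝ) ≤ (∑ i ∈ clusterSet s k, ω i ^ 2) * x k ^ 2 := fun k _ => by
        have := (hqpos k).le; positivity
      ext k
      have h6 := (Finset.sum_eq_zero_iff_of_nonneg hterm).1 h0 k (Finset.mem_univ k)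
      have hk : x k ^ 2 = 0 := by
        rcases mul_eq_zero.1 h6 with h | h
        · exact absurd h (hqpos k).ne'
        · exact h
      simpa using pow_eq_zero_iff (n := 2) (by norm_num) |>.1 hk
    refine ⟨LinearMap.range (Matrix.toEuclideanLin (degMat ω * clusterInd s)), ?_, ?_⟩
    · rw [LinearMap.finrank_range_of_inj hinj, finrank_euclideanSpace_fin]
    · rintro v ⟨x, rfl⟩
      have key : Matrix.toEuclideanLin (degMat ω * clusterInd s * Θᵀ)ᵀ
            (Matrix.toEuclideanLin (degMat ω * clusterInd s) x)
          = Matrix.toEuclideanLin Θ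
            (Matrix.toEuclideanLin
              (Matrix.diagonal (fun k => ∑ i ∈ clusterSet s k, ω i ^ 2)) x) := by
        rw [Matrix.transpose_mul, Matrix.transpose_transpose, tEL_mul]
        congr 1
        rw [← tEL_mul, MtM]
      rw [key]
      set y := Matrix.toEuclideanLin
        (Matrix.diagonal (fun k => ∑ i ∈ clusterSet s k, ω i ^ 2)) x with hy
      have hyk : ∀ k, y k = (∑ i ∈ clusterSet s k, ω i ^ 2) * x k := by
        intro k
        rw [hy, tEL_apply]
        simp [Matrix.diagonal_apply, ite_mul]
      have hv2 : ‖Matrix.toEuclideanLin (degMat ω * clusterInd s) x‖ ^ 2 =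
          ∑ k, (∑ i ∈ clusterSet s k, ω i ^ 2) * x k ^ 2 := Mx_norm_sq s ω x
      have hy2 : ‖y‖ ^ 2 = ∑ k, (∑ i ∈ clusterSet s k, ω i ^ 2) ^ 2 * x k ^ 2 := by
        rw [euclid_norm_sq]
        refine Finset.sum_congr rfl fun k _ => ?_
        rw [hyk]; ring
      have hcy : (Finset.univ.inf' ⟨⟨0, hK⟩, Finset.mem_univ _⟩
            (fun k => Real.sqrt (∑ i ∈ clusterSet s k, ω i ^ 2))) *
          ‖Matrix.toEuclideanLin (degMat ω * clusterInd s) x‖ ≤ ‖y‖ := by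
        refine le_of_sq_le_sq'' (by positivity) (norm_nonneg _) ?_
        rw [mul_pow, hv2, hy2, Finset.mul_sum]
        refine Finset.sum_le_sum fun k _ => ?_
        have h2 : Finset.univ.inf' ⟨⟨0, hK⟩, Finset.mem_univ _⟩
              (fun k => Real.sqrt (∑ i ∈ clusterSet s k, ω i ^ 2)) ≤
            Real.sqrt (∑ i ∈ clusterSet s k, ω i ^ 2) :=
          Finset.inf'_le (f := fun k => Real.sqrt (∑ i ∈ clusterSet s k, ω i ^ 2))
            (Finset.mem_univ k)
        have h3 : (Finset.univ.inf' ⟨⟨0, hK⟩, Finset.mem_univ _⟩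
              (fun k => Real.sqrt (∑ i ∈ clusterSet s k, ω i ^ 2))) ^ 2 ≤
            (∑ i ∈ clusterSet s k, ω i ^ 2) := by
          have := mul_self_le_mul_self hc0 h2
          have h4 := Real.sq_sqrt (hqpos k).le
          nlinarith
        calc (Finset.univ.inf' ⟨⟨0, hK⟩, Finset.mem_univ _⟩
              (fun k => Real.sqrt (∑ i ∈ clusterSet s k, ω i ^ 2))) ^ 2 *
              ((∑ i ∈ clusterSet s k, ω i ^ 2) * x k ^ 2)
            ≤ (∑ i ∈ clusterSet s k, ω i ^ 2) * ((∑ i ∈ clusterSet s k, ω i ^ 2) * x k ^ 2) := by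
              refine mul_le_mul_of_nonneg_right h3 ?_
              have := (hqpos k).le
              positivity
          _ = (∑ i ∈ clusterSet s k, ω i ^ 2) ^ 2 * x k ^ 2 := by ring
      calc (Finset.univ.inf' ⟨⟨0, hK⟩, Finset.mem_univ _⟩
              (fun k => Real.sqrt (∑ i ∈ clusterSet s k, ω i ^ 2))) * sigmaStar Θ *
            ‖Matrix.toEuclideanLin (degMat ω * clusterInd s) x‖
          = sigmaStar Θ * ((Finset.univ.inf' ⟨⟨0, hK⟩, Finset.mem_univ _⟩
              (fun k => Real.sqrt (∑ i ∈ clusterSet s k, ω i ^ 2))) *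
            ‖Matrix.toEuclideanLin (degMat ω * clusterInd s) x‖) := by ring
        _ ≤ sigmaStar Θ * ‖y‖ := mul_le_mul_of_nonneg_left hcy (sigmaStar_nonneg Θ)
        _ ≤ ‖Matrix.toEuclideanLin Θ y‖ := sigmaStar_mul_norm_le Θ y
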